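/- arXiv:2604.27160 — 3 statements merged into one kernel-verified Lean document; each statement's English description precedes it below -/
import Mathlib

section
/- Let C > 0 and let γ be product weights, γ_u = Π_{j ∈ u} γ_j, with (γ_j)_{j ∈ ℕ} non-increasing and non-negative. (i) If Σ_{v ∈ 𝒰} C^{2|v|} γ_v < ∞, then with η_u := C^{2|u|} γ_u and c := Π_{j ∈ ℕ} (1 + C² γ_j) ∈ [1, ∞) one has η_u ≤ (T↑ γ)_u ≤ c η_u for every u ∈ 𝒰, where (T↑ γ)_u := Σ_{v ∈ 𝒰, u ⊆ v} C^{2|v|} γ_v; moreover Σ_{v} C^{2|v|} η_v < ∞. (ii) If γ is completely monotone (equivalently, 0 ≤ γ_j ≤ 1 for all j), then with ζ_u := C^{−2|u|} γ_u and c' := Π_{j ∈ ℕ} (1 − γ_j) ∈ [0, 1] one has c' ζ_u ≤ (T↓ γ)_u ≤ ζ_u for every u ∈ 𝒰, where (T↓ γ)_u := C^{−2|u|} lim_{s → ∞} (Δ_{[s] ∖ u} γ)_u; furthermore Σ_{v} C^{2|v|} ζ_v < ∞ if and only if Σ_{v} C^{2|v|} γ_v < ∞. -/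
open Finset Filter Topology

/-- The difference operator `Δ_v` on families indexed by finite subsets of `ℕ`:
`(Δ_v γ)_u := Σ_{w ⊆ v} (−1)^{|w|} γ_{u ∪ w}`. -/
noncomputable def Δ (v : Finset ℕ) (γ : Finset ℕ → ℝ) (u : Finset ℕ) : ℝ :=
  ∑ w ∈ v.powerset, (-1 : ℝ) ^ w.card * γ (u ∪ w)

lemma aux1 (g : ℕ → ℝ) (hg : ∀ j, 0 ≤ g j) (S : Finset (Finset ℕ)) (t : Finset ℕ)
    (hst : ∀ v ∈ S, v ⊆ t) : ∑ v ∈ S, ∏ j ∈ v, g j ≤ ∏ j ∈ t, (1 + g j) := by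
  have h1 : ∏ j ∈ t, (1 + g j) = ∑ w ∈ t.powerset, ∏ j ∈ w, g j := by
    have := Finset.prod_add g (fun _ => (1:ℝ)) t
    simp only [Finset.prod_const_one, mul_one] at this
    simpa [add_comm] using this
  rw [h1]
  apply Finset.sum_le_sum_of_subset_of_nonneg
  · intro v hv; exact Finset.mem_powerset.2 (hst v hv)
  · intro v _ _; exact Finset.prod_nonneg fun j _ => hg j

lemma aux2 (g : ℕ → ℝ) (hg : ∀ j, 0 ≤ g j) (hs : Summable g) :
    Summable (fun v : Finset ℕ => ∏ j ∈ v, g j) := by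
  apply summable_of_sum_le (c := Real.exp (∑' j, g j))
    (fun v => Finset.prod_nonneg fun j _ => hg j)
  intro S
  calc ∑ v ∈ S, ∏ j ∈ v, g j ≤ ∏ j ∈ S.sup id, (1 + g j) :=
        aux1 g hg S _ (fun v hv => Finset.le_sup (f := id) hv)
    _ ≤ ∏ j ∈ S.sup id, Real.exp (g j) := by
        apply Finset.prod_le_prod (fun j _ => by linarith [hg j])
        intro j _; linarith [Real.add_one_le_exp (g j)]
    _ = Real.exp (∑ j ∈ S.sup id, g j) := (Real.exp_sum _ _).symm
    _ ≤ Real.exp (∑' j, g j) := Real.exp_le_exp.2 (Summable.sum_le_tsum _ (fun j _ => hg j) hs)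

lemma aux3 (g : ℕ → ℝ) (hs : Summable (fun v : Finset ℕ => ∏ j ∈ v, g j)) :
    Summable g := by
  have := hs.comp_injective (Finset.singleton_injective (α := ℕ))
  exact this.congr (fun j => by simp)

lemma aux4b (g : ℕ → ℝ) (hg : ∀ j, 0 ≤ g j) (hs : Summable g) :
    BddAbove (Set.range fun s : Finset ℕ => ∏ j ∈ s, (1 + g j)) := by
  refine ⟨Real.exp (∑' j, g j), ?_⟩
  rintro x ⟨s, rfl⟩
  calc ∏ j ∈ s, (1 + g j) ≤ ∏ j ∈ s, Real.exp (g j) := by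
        apply Finset.prod_le_prod (fun j _ => by linarith [hg j])
        intro j _; linarith [Real.add_one_le_exp (g j)]
    _ = Real.exp (∑ j ∈ s, g j) := (Real.exp_sum _ _).symm
    _ ≤ Real.exp (∑' j, g j) := Real.exp_le_exp.2 (Summable.sum_le_tsum _ (fun j _ => hg j) hs)

lemma aux4 (g : ℕ → ℝ) (hg : ∀ j, 0 ≤ g j) (hs : Summable g) :
    HasProd (fun j => 1 + g j) (⨆ s : Finset ℕ, ∏ j ∈ s, (1 + g j)) := by
  apply tendsto_atTop_ciSup
  · intro s t hst
    dsimp only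
    calc ∏ j ∈ s, (1 + g j) = 1 * ∏ j ∈ s, (1 + g j) := (one_mul _).symm
      _ ≤ (∏ j ∈ t \ s, (1 + g j)) * ∏ j ∈ s, (1 + g j) := by
          apply mul_le_mul_of_nonneg_right _
            (Finset.prod_nonneg fun j _ => by linarith [hg j])
          calc (1:ℝ) = ∏ j ∈ t \ s, 1 := by simp
            _ ≤ _ := Finset.prod_le_prod (by simp) (fun j _ => by linarith [hg j])
      _ = ∏ j ∈ t, (1 + g j) := Finset.prod_sdiff (Finset.le_iff_subset.mp hst)
  · exact aux4b g hg hs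

lemma aux6 (f : ℕ → ℝ) (h0 : ∀ j, 0 ≤ f j) (h1 : ∀ j, f j ≤ 1) {s t : Finset ℕ}
    (hst : s ⊆ t) : ∏ j ∈ t, f j ≤ ∏ j ∈ s, f j := by
  calc ∏ j ∈ t, f j = (∏ j ∈ t \ s, f j) * ∏ j ∈ s, f j := (Finset.prod_sdiff hst).symm
    _ ≤ 1 * ∏ j ∈ s, f j := by
        apply mul_le_mul_of_nonneg_right _ (Finset.prod_nonneg fun j _ => h0 j)
        exact Finset.prod_le_one (fun j _ => h0 j) (fun j _ => h1 j)
    _ = ∏ j ∈ s, f j := one_mul _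

lemma aux5 (f : ℕ → ℝ) (h0 : ∀ j, 0 ≤ f j) (h1 : ∀ j, f j ≤ 1) :
    HasProd f (⨅ s : Finset ℕ, ∏ j ∈ s, f j) := by
  apply tendsto_atTop_ciInf
  · intro s t hst
    exact aux6 f h0 h1 (Finset.le_iff_subset.mp hst)
  · exact ⟨0, by rintro x ⟨s, rfl⟩; exact Finset.prod_nonneg fun j _ => h0 j⟩

/-- Expansion of a product of `1 - f j` as a signed sum over subsets. -/
lemma aux7 (f : ℕ → ℝ) (v : Finset ℕ) :
    ∏ j ∈ v, (1 - f j) = ∑ w ∈ v.powerset, (-1:ℝ) ^ w.card * ∏ j ∈ w, f j := by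
  have h := Finset.prod_add (fun j => -f j) (fun _ => (1:ℝ)) v
  simp only [Finset.prod_const_one, mul_one] at h
  calc ∏ j ∈ v, (1 - f j) = ∏ j ∈ v, (-f j + 1) := by
        exact Finset.prod_congr rfl fun j _ => by ring
    _ = ∑ w ∈ v.powerset, ∏ j ∈ w, (-f j) := h
    _ = ∑ w ∈ v.powerset, (-1:ℝ) ^ w.card * ∏ j ∈ w, f j := by
        refine Finset.sum_congr rfl fun w _ => ?_
        calc ∏ j ∈ w, (-f j) = ∏ j ∈ w, ((-1) * f j) :=
              Finset.prod_congr rfl fun j _ => by ring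
          _ = (∏ _j ∈ w, (-1:ℝ)) * ∏ j ∈ w, f j := Finset.prod_mul_distrib
          _ = (-1:ℝ) ^ w.card * ∏ j ∈ w, f j := by rw [Finset.prod_const]

set_option maxHeartbeats 2000000 in
theorem stmt17 (C : ℝ) (hC : 0 < C) (γseq : ℕ → ℝ) (hmono : Antitone γseq)
    (hnn : ∀ j, 0 ≤ γseq j)
    (γ : Finset ℕ → ℝ) (hγ : ∀ u, γ u = ∏ j ∈ u, γseq j) :
    -- (i)
    ((Summable fun v : Finset ℕ => C ^ (2 * v.card) * γ v) →
      Multipliable (fun j : ℕ => 1 + C ^ 2 * γseq j) ∧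
      1 ≤ ∏' j : ℕ, (1 + C ^ 2 * γseq j) ∧
      (∀ u : Finset ℕ,
        C ^ (2 * u.card) * γ u ≤
          (∑' v : Finset ℕ, if u ⊆ v then C ^ (2 * v.card) * γ v else 0) ∧
        (∑' v : Finset ℕ, if u ⊆ v then C ^ (2 * v.card) * γ v else 0) ≤
          (∏' j : ℕ, (1 + C ^ 2 * γseq j)) * (C ^ (2 * u.card) * γ u)) ∧
      Summable fun v : Finset ℕ => C ^ (2 * v.card) * (C ^ (2 * v.card) * γ v)) ∧
    -- (ii)
    ((∀ j, γseq j ≤ 1) →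
      Multipliable (fun j : ℕ => 1 - γseq j) ∧
      0 ≤ (∏' j : ℕ, (1 - γseq j)) ∧ (∏' j : ℕ, (1 - γseq j)) ≤ 1 ∧
      (∀ Td : Finset ℕ → ℝ,
        (∀ u : Finset ℕ, Tendsto (fun s : ℕ => Δ (Finset.range s \ u) γ u) atTop
          (𝓝 (C ^ (2 * u.card) * Td u))) →
        ∀ u : Finset ℕ,
          (∏' j : ℕ, (1 - γseq j)) * ((C ^ (2 * u.card))⁻¹ * γ u) ≤ Td u ∧
          Td u ≤ (C ^ (2 * u.card))⁻¹ * γ u) ∧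
      ((Summable fun v : Finset ℕ => C ^ (2 * v.card) * ((C ^ (2 * v.card))⁻¹ * γ v)) ↔
        Summable fun v : Finset ℕ => C ^ (2 * v.card) * γ v)) := by
  have hgnn : ∀ j, 0 ≤ C ^ 2 * γseq j := fun j => mul_nonneg (by positivity) (hnn j)
  have hkey : ∀ v : Finset ℕ, C ^ (2 * v.card) * γ v = ∏ j ∈ v, (C ^ 2 * γseq j) := by
    intro v
    rw [hγ, pow_mul, ← Finset.prod_const, ← Finset.prod_mul_distrib]
  constructor
  · -- part (i)
    intro hsum
    have hsum' : Summable (fun v : Finset ℕ => ∏ j ∈ v, (C ^ 2 * γseq j)) :=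
      hsum.congr hkey
    have hsg : Summable (fun j => C ^ 2 * γseq j) := aux3 _ hsum'
    have hp := aux4 _ hgnn hsg
    have hbdd := aux4b _ hgnn hsg
    have htp : ∏' j, (1 + C ^ 2 * γseq j) =
        ⨆ s : Finset ℕ, ∏ j ∈ s, (1 + C ^ 2 * γseq j) := hp.tprod_eq
    have hFnn : ∀ v : Finset ℕ, 0 ≤ C ^ (2 * v.card) * γ v := fun v => by
      rw [hkey]; exact Finset.prod_nonneg fun j _ => hgnn j
    refine ⟨hp.multipliable, ?_, ?_, ?_⟩
    · rw [htp]
      simpa using le_ciSup hbdd (∅ : Finset ℕ)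
    · intro u
      have hsub : Summable (fun v : Finset ℕ =>
          if u ⊆ v then C ^ (2 * v.card) * γ v else 0) := by
        apply Summable.of_nonneg_of_le (f := fun v => C ^ (2 * v.card) * γ v)
        · intro v; split <;> [exact hFnn v; exact le_rfl]
        · intro v; split <;> [exact le_refl _; exact hFnn v]
        · exact hsum
      constructor
      · have h := Summable.le_tsum hsub u (fun v _ => by
          split <;> [exact hFnn v; exact le_refl 0])
        simpa using h
      · apply Summable.tsum_le_of_sum_le hsub
        intro S
        set S' := S.filter (fun v => u ⊆ v) with hS'
        have hinj : ∀ v1 ∈ S', ∀ v2 ∈ S', v1 \ u = v2 \ u → v1 = v2 := by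
          intro v1 hv1 v2 hv2 h
          have h1 : u ⊆ v1 := (Finset.mem_filter.1 hv1).2
          have h2 : u ⊆ v2 := (Finset.mem_filter.1 hv2).2
          rw [← Finset.union_sdiff_of_subset h1, ← Finset.union_sdiff_of_subset h2, h]
        have hsumle : ∑ w ∈ S'.image (· \ u), ∏ j ∈ w, (C ^ 2 * γseq j) ≤
            ∏' j, (1 + C ^ 2 * γseq j) := by
          calc ∑ w ∈ S'.image (· \ u), ∏ j ∈ w, (C ^ 2 * γseq j)
              ≤ ∏ j ∈ (S'.image (· \ u)).sup id, (1 + C ^ 2 * γseq j) :=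
                aux1 _ hgnn _ _ (fun v hv => Finset.le_sup (f := id) hv)
            _ ≤ ∏' j, (1 + C ^ 2 * γseq j) := by rw [htp]; exact le_ciSup hbdd _
        calc ∑ v ∈ S, (if u ⊆ v then C ^ (2 * v.card) * γ v else 0)
            = ∑ v ∈ S', C ^ (2 * v.card) * γ v := (Finset.sum_filter _ _).symm
          _ = ∑ v ∈ S', (C ^ (2 * u.card) * γ u) * ∏ j ∈ v \ u, (C ^ 2 * γseq j) := by
              refine Finset.sum_congr rfl fun v hv => ?_
              have h1 : u ⊆ v := (Finset.mem_filter.1 hv).2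
              rw [hkey, hkey, ← Finset.prod_sdiff h1, mul_comm]
          _ = (C ^ (2 * u.card) * γ u) * ∑ v ∈ S', ∏ j ∈ v \ u, (C ^ 2 * γseq j) :=
              (Finset.mul_sum _ _ _).symm
          _ = (C ^ (2 * u.card) * γ u) *
                ∑ w ∈ S'.image (· \ u), ∏ j ∈ w, (C ^ 2 * γseq j) := by
              rw [Finset.sum_image hinj]
          _ ≤ (C ^ (2 * u.card) * γ u) * ∏' j, (1 + C ^ 2 * γseq j) :=
              mul_le_mul_of_nonneg_left hsumle (hFnn u)
          _ = (∏' j, (1 + C ^ 2 * γseq j)) * (C ^ (2 * u.card) * γ u) := mul_comm _ _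
    · have hkey4 : ∀ v : Finset ℕ, C ^ (2 * v.card) * (C ^ (2 * v.card) * γ v) =
          ∏ j ∈ v, (C ^ 4 * γseq j) := by
        intro v
        rw [hγ, ← mul_assoc, ← pow_add]
        have h24 : 2 * v.card + 2 * v.card = 4 * v.card := by ring
        rw [h24, pow_mul, ← Finset.prod_const, ← Finset.prod_mul_distrib]
      have h4 : Summable (fun j => C ^ 4 * γseq j) :=
        (hsg.mul_left (C ^ 2)).congr (fun j => by ring)
      have h5 := aux2 _ (fun j => mul_nonneg (by positivity) (hnn j)) h4
      exact h5.congr (fun v => (hkey4 v).symm)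
  · -- part (ii)
    intro hbd
    have hf0 : ∀ j, 0 ≤ 1 - γseq j := fun j => by linarith [hbd j]
    have hf1 : ∀ j, 1 - γseq j ≤ 1 := fun j => by linarith [hnn j]
    have hp := aux5 (fun j => 1 - γseq j) hf0 hf1
    have hbdd : BddBelow (Set.range fun s : Finset ℕ => ∏ j ∈ s, (1 - γseq j)) :=
      ⟨0, by rintro x ⟨s, rfl⟩; exact Finset.prod_nonneg fun j _ => hf0 j⟩
    have htp : ∏' j, (1 - γseq j) = ⨅ s : Finset ℕ, ∏ j ∈ s, (1 - γseq j) := hp.tprod_eq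
    refine ⟨hp.multipliable, ?_, ?_, ?_, ?_⟩
    · rw [htp]
      exact le_ciInf fun s => Finset.prod_nonneg fun j _ => hf0 j
    · rw [htp]
      simpa using ciInf_le hbdd (∅ : Finset ℕ)
    · intro Td hTd u
      have hdel : ∀ s : ℕ, Δ (Finset.range s \ u) γ u =
          γ u * ∏ j ∈ Finset.range s \ u, (1 - γseq j) := by
        intro s
        have hdisj : ∀ w ∈ (Finset.range s \ u).powerset, γ (u ∪ w) =
            γ u * ∏ j ∈ w, γseq j := by
          intro w hw
          have hw' : w ⊆ Finset.range s \ u := Finset.mem_powerset.1 hw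
          have hd : Disjoint u w :=
            (Finset.sdiff_disjoint.mono_left hw').symm
          rw [hγ, hγ, Finset.prod_union hd]
        rw [Δ, aux7]
        rw [Finset.mul_sum]
        refine Finset.sum_congr rfl fun w hw => ?_
        rw [hdisj w hw]; ring
      have hPbdd : BddBelow (Set.range fun s : ℕ =>
          ∏ j ∈ Finset.range s \ u, (1 - γseq j)) :=
        ⟨0, by rintro x ⟨s, rfl⟩; exact Finset.prod_nonneg fun j _ => hf0 j⟩
      have hP : Tendsto (fun s : ℕ => ∏ j ∈ Finset.range s \ u, (1 - γseq j)) atTop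
          (𝓝 (⨅ s : ℕ, ∏ j ∈ Finset.range s \ u, (1 - γseq j))) := by
        apply tendsto_atTop_ciInf
        · intro s t hst
          exact aux6 _ hf0 hf1
            (Finset.sdiff_subset_sdiff (Finset.range_subset_range.2 hst) le_rfl)
        · exact hPbdd
      set L := ⨅ s : ℕ, ∏ j ∈ Finset.range s \ u, (1 - γseq j) with hL
      have h2 : Tendsto (fun s : ℕ => Δ (Finset.range s \ u) γ u) atTop
          (𝓝 (γ u * L)) := by
        refine (hP.const_mul (γ u)).congr fun s => (hdel s).symm
      have heq : C ^ (2 * u.card) * Td u = γ u * L := tendsto_nhds_unique (hTd u) h2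
      have hCne : (C ^ (2 * u.card) : ℝ) ≠ 0 := pow_ne_zero _ hC.ne'
      have hTdu : Td u = (C ^ (2 * u.card))⁻¹ * (γ u * L) := by
        rw [← heq, inv_mul_cancel_left₀ hCne]
      have hγu : 0 ≤ γ u := by
        rw [hγ]; exact Finset.prod_nonneg fun j _ => hnn j
      have hCinv : 0 ≤ (C ^ (2 * u.card) : ℝ)⁻¹ := by positivity
      have hL1 : L ≤ 1 := by
        have := ciInf_le hPbdd 0
        simpa using this
      have hcL : (∏' j, (1 - γseq j)) ≤ L := by
        rw [htp]
        exact le_ciInf fun s => ciInf_le hbdd (Finset.range s \ u)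
      constructor
      · rw [hTdu]
        calc (∏' j, (1 - γseq j)) * ((C ^ (2 * u.card))⁻¹ * γ u)
            = ((C ^ (2 * u.card))⁻¹ * γ u) * (∏' j, (1 - γseq j)) := by ring
          _ ≤ ((C ^ (2 * u.card))⁻¹ * γ u) * L :=
              mul_le_mul_of_nonneg_left hcL (mul_nonneg hCinv hγu)
          _ = (C ^ (2 * u.card))⁻¹ * (γ u * L) := by ring
      · rw [hTdu]
        calc (C ^ (2 * u.card))⁻¹ * (γ u * L)
            = ((C ^ (2 * u.card))⁻¹ * γ u) * L := by ring
          _ ≤ ((C ^ (2 * u.card))⁻¹ * γ u) * 1 :=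
              mul_le_mul_of_nonneg_left hL1 (mul_nonneg hCinv hγu)
          _ = (C ^ (2 * u.card))⁻¹ * γ u := mul_one _
    · have hid : ∀ v : Finset ℕ,
          C ^ (2 * v.card) * ((C ^ (2 * v.card))⁻¹ * γ v) = γ v := fun v =>
        mul_inv_cancel_left₀ (pow_ne_zero _ hC.ne') (γ v)
      constructor
      · intro h
        have h1 : Summable (fun v : Finset ℕ => γ v) := h.congr hid
        have h2 : Summable (fun v : Finset ℕ => ∏ j ∈ v, γseq j) := h1.congr hγ
        have h3 : Summable γseq := aux3 _ h2
        have h4 : Summable (fun j => C ^ 2 * γseq j) := h3.mul_left _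
        have h5 := aux2 _ hgnn h4
        exact h5.congr (fun v => (hkey v).symm)
      · intro h
        have h2 : Summable (fun v : Finset ℕ => ∏ j ∈ v, (C ^ 2 * γseq j)) :=
          h.congr hkey
        have h3 := aux3 _ h2
        have h4 : Summable γseq := (h3.mul_left ((C ^ 2)⁻¹)).congr
          (fun j => inv_mul_cancel_left₀ (by positivity) _)
        have h5 := aux2 γseq hnn h4
        exact ((h5.congr (fun v => (hγ v).symm)).congr (fun v => (hid v).symm))
end

section
/- Let C > 0 and let γ be POD weights, γ_u = Γ_{|u|} Π_{j ∈ u} γ_j, with (γ_j) non-increasing and non-negative and 0 ≤ Γ_k ≤ C_a (k!)^a for constants a, C_a > 0. Put c := Σ_{w ∈ 𝒰} (|w|!)^a Π_{j ∈ w} (2^a C² γ_j) ∈ [1, ∞]. (i) If Σ_{v ∈ 𝒰} C^{2|v|} γ_v < ∞, then η ≤ T↑ γ ≤ c ξ pointwise, where (T↑ γ)_u := Σ_{v ∈ 𝒰, u ⊆ v} C^{2|v|} γ_v, η_u := C^{2|u|} γ_u, and ξ_u := C_a (|u|!)^a Π_{j ∈ u} (2^a C² γ_j). (ii) If γ is completely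 monotone, then 0 ≤ (T↓ γ)_u ≤ C^{−2|u|} γ_u for every u ∈ 𝒰, where (T↓ γ)_u := C^{−2|u|} lim_{s → ∞} (Δ_{[s] ∖ u} γ)_u. -/
open Finset Filter Topology

lemma delta_insert (γ : Finset ℕ → ℝ) {j : ℕ} {v : Finset ℕ} (hj : j ∉ v) (u : Finset ℕ) :
    Δ (insert j v) γ u = Δ v γ u - Δ v γ (u ∪ {j}) := by
  unfold Δ
  rw [Finset.sum_powerset_insert hj]
  have h2 : ∑ w ∈ v.powerset, (-1:ℝ)^(insert j w).card * γ (u ∪ insert j w)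
      = -∑ w ∈ v.powerset, (-1:ℝ)^w.card * γ ((u ∪ {j}) ∪ w) := by
    rw [← Finset.sum_neg_distrib]
    apply Finset.sum_congr rfl
    intro w hw
    have hjw : j ∉ w := fun h => hj (Finset.mem_powerset.mp hw h)
    have hu : u ∪ insert j w = (u ∪ {j}) ∪ w := by
      ext x; simp [Finset.mem_insert, Finset.mem_union, or_comm, or_assoc, or_left_comm]
    rw [Finset.card_insert_of_notMem hjw, hu, pow_succ]
    ring
  rw [h2]; ring

lemma fact_le_two_pow_mul (m n : ℕ) :
    (m + n).factorial ≤ 2 ^ (m + n) * m.factorial * n.factorial := by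
  have h1 : (m+n).choose m * m.factorial * (m + n - m).factorial = (m+n).factorial :=
    Nat.choose_mul_factorial_mul_factorial (Nat.le_add_right m n)
  have h2 : (m+n).choose m ≤ 2 ^ (m+n) := by
    calc (m+n).choose m ≤ ∑ i ∈ Finset.range (m+n+1), (m+n).choose i :=
          Finset.single_le_sum (fun i _ => Nat.zero_le _)
            (Finset.mem_range.mpr (by omega))
      _ = 2 ^ (m+n) := Nat.sum_range_choose (m+n)
  have h3 : m + n - m = n := by omega
  rw [h3] at h1
  calc (m+n).factorial = (m+n).choose m * m.factorial * n.factorial := h1.symm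
    _ ≤ 2 ^ (m+n) * m.factorial * n.factorial := by
        exact Nat.mul_le_mul_right _ (Nat.mul_le_mul_right _ h2)

theorem stmt18 (C : ℝ) (hC : 0 < C) (γseq : ℕ → ℝ) (Γ : ℕ → ℝ) (a Ca : ℝ)
    (hmono : Antitone γseq) (hnn : ∀ j, 0 ≤ γseq j) (hΓnn : ∀ k, 0 ≤ Γ k)
    (ha : 0 < a) (hCa : 0 < Ca) (hΓ : ∀ k : ℕ, Γ k ≤ Ca * (k.factorial : ℝ) ^ a)
    (γ : Finset ℕ → ℝ) (hγ : ∀ u, γ u = Γ u.card * ∏ j ∈ u, γseq j)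
    (c : ENNReal)
    (hc : c = ∑' w : Finset ℕ,
      ENNReal.ofReal ((w.card.factorial : ℝ) ^ a * ∏ j ∈ w, ((2 : ℝ) ^ a * C ^ 2 * γseq j))) :
    -- c ∈ [1, ∞]
    1 ≤ c ∧
    -- (i)
    ((Summable fun v : Finset ℕ => C ^ (2 * v.card) * γ v) →
      ∀ u : Finset ℕ,
        C ^ (2 * u.card) * γ u ≤
          (∑' v : Finset ℕ, if u ⊆ v then C ^ (2 * v.card) * γ v else 0) ∧
        ENNReal.ofReal (∑' v : Finset ℕ, if u ⊆ v then C ^ (2 * v.card) * γ v else 0) ≤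
          c * ENNReal.ofReal
            (Ca * (u.card.factorial : ℝ) ^ a * ∏ j ∈ u, ((2 : ℝ) ^ a * C ^ 2 * γseq j))) ∧
    -- (ii)
    ((∀ v u : Finset ℕ, 0 ≤ Δ v γ u) →
      ∀ Td : Finset ℕ → ℝ,
        (∀ u : Finset ℕ, Tendsto (fun s : ℕ => Δ (Finset.range s \ u) γ u) atTop
          (𝓝 (C ^ (2 * u.card) * Td u))) →
        ∀ u : Finset ℕ, 0 ≤ Td u ∧ Td u ≤ (C ^ (2 * u.card))⁻¹ * γ u) := by
  have hγnn : ∀ u, 0 ≤ γ u := fun u => by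
    rw [hγ]; exact mul_nonneg (hΓnn _) (Finset.prod_nonneg fun j _ => hnn j)
  have hfnn : ∀ v : Finset ℕ, (0:ℝ) ≤ C ^ (2 * v.card) * γ v := fun v =>
    mul_nonneg (pow_nonneg hC.le _) (hγnn v)
  refine ⟨?_, ?_, ?_⟩
  · -- 1 ≤ c
    rw [hc]
    have h := ENNReal.le_tsum (f := fun w : Finset ℕ =>
      ENNReal.ofReal ((w.card.factorial : ℝ) ^ a * ∏ j ∈ w, ((2 : ℝ) ^ a * C ^ 2 * γseq j)))
      (∅ : Finset ℕ)
    simpa using h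
  · -- (i)
    intro hsum u
    set f : Finset ℕ → ℝ := fun v => C ^ (2 * v.card) * γ v with hf
    set g : Finset ℕ → ℝ := fun v => if u ⊆ v then f v else 0 with hg
    have hgnn : ∀ v, 0 ≤ g v := fun v => by
      by_cases h : u ⊆ v <;> simp [hg, hf, h, hfnn v]
    have hgs : Summable g :=
      hsum.of_nonneg_of_le hgnn (fun v => by
        by_cases h : u ⊆ v <;> simp [hg, hf, h, hfnn v])
    constructor
    · have := Summable.le_tsum hgs u (fun j _ => hgnn j)
      simpa [hg, hf] using this
    · -- key per-term real inequality
      set ξ : ℝ := Ca * (u.card.factorial : ℝ) ^ a * ∏ j ∈ u, ((2 : ℝ) ^ a * C ^ 2 * γseq j)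
        with hξ
      have hξnn : 0 ≤ ξ := by
        apply mul_nonneg (mul_nonneg hCa.le (Real.rpow_nonneg (Nat.cast_nonneg _) a))
        exact Finset.prod_nonneg fun j _ =>
          mul_nonneg (by positivity) (hnn j)
      have hkey : ∀ v : Finset ℕ, u ⊆ v →
          f v ≤ ξ * (((v \ u).card.factorial : ℝ) ^ a *
            ∏ j ∈ (v \ u), ((2 : ℝ) ^ a * C ^ 2 * γseq j)) := by
        intro v huv
        set m := u.card
        set n := (v \ u).card
        have hdisj : Disjoint u (v \ u) := Finset.disjoint_sdiff
        have hun : u ∪ (v \ u) = v := Finset.union_sdiff_of_subset huv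
        have hcard : v.card = m + n := by
          rw [← hun, Finset.card_union_of_disjoint hdisj]
        have hprod : (∏ j ∈ u, ((2:ℝ)^a * C^2 * γseq j)) *
            ∏ j ∈ (v \ u), ((2:ℝ)^a * C^2 * γseq j) = ∏ j ∈ v, ((2:ℝ)^a * C^2 * γseq j) := by
          rw [← Finset.prod_union hdisj, hun]
        have hprodv : ∏ j ∈ v, ((2:ℝ)^a * C^2 * γseq j)
            = ((2:ℝ)^a)^(v.card) * C^(2*v.card) * ∏ j ∈ v, γseq j := by
          rw [Finset.prod_mul_distrib, Finset.prod_mul_distrib, Finset.prod_const,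
            Finset.prod_const, pow_mul]
        have hΓle : Γ (v.card) ≤ Ca * ((2:ℝ)^a)^(v.card)
            * (m.factorial:ℝ)^a * (n.factorial:ℝ)^a := by
          have h1 : Γ (v.card) ≤ Ca * ((v.card).factorial : ℝ) ^ a := hΓ _
          have h2 : ((v.card).factorial : ℝ) ^ a
              ≤ ((2^(v.card) * m.factorial * n.factorial : ℕ) : ℝ) ^ a := by
            apply Real.rpow_le_rpow (Nat.cast_nonneg _) _ ha.le
            exact_mod_cast hcard ▸ fact_le_two_pow_mul m n
          have h3 : ((2^(v.card) * m.factorial * n.factorial : ℕ) : ℝ) ^ a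
              = ((2:ℝ)^a)^(v.card) * (m.factorial:ℝ)^a * (n.factorial:ℝ)^a := by
            push_cast
            rw [Real.mul_rpow (by positivity) (by positivity),
              Real.mul_rpow (by positivity) (by positivity)]
            congr 1
            congr 1
            rw [← Real.rpow_natCast (2:ℝ) v.card, ← Real.rpow_natCast ((2:ℝ)^a) v.card,
              ← Real.rpow_mul (by norm_num), ← Real.rpow_mul (by norm_num), mul_comm]
          calc Γ (v.card) ≤ Ca * ((v.card).factorial : ℝ) ^ a := h1
            _ ≤ Ca * (((2:ℝ)^a)^(v.card) * (m.factorial:ℝ)^a * (n.factorial:ℝ)^a) := by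
                rw [← h3]; exact mul_le_mul_of_nonneg_left h2 hCa.le
            _ = _ := by ring
        have hPnn : (0:ℝ) ≤ C^(2*v.card) * ∏ j ∈ v, γseq j := by
          apply mul_nonneg (by positivity) (Finset.prod_nonneg fun j _ => hnn j)
        calc f v = Γ (v.card) * (C^(2*v.card) * ∏ j ∈ v, γseq j) := by
              simp only [hf, hγ]; ring
          _ ≤ (Ca * ((2:ℝ)^a)^(v.card) * (m.factorial:ℝ)^a * (n.factorial:ℝ)^a)
              * (C^(2*v.card) * ∏ j ∈ v, γseq j) := mul_le_mul_of_nonneg_right hΓle hPnn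
          _ = (Ca * (m.factorial:ℝ)^a * (n.factorial:ℝ)^a)
              * (((2:ℝ)^a)^(v.card) * C^(2*v.card) * ∏ j ∈ v, γseq j) := by ring
          _ = (Ca * (m.factorial:ℝ)^a * (n.factorial:ℝ)^a)
              * ∏ j ∈ v, ((2:ℝ)^a * C^2 * γseq j) := by rw [hprodv]
          _ = ξ * (((n.factorial:ℝ))^a * ∏ j ∈ (v \ u), ((2:ℝ)^a * C^2 * γseq j)) := by
              rw [hξ, ← hprod]; ring
      -- now the ENNReal computation
      rw [ENNReal.ofReal_tsum_of_nonneg hgnn hgs]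
      have hind : ∀ v, ENNReal.ofReal (g v)
          = Set.indicator {v : Finset ℕ | u ⊆ v} (fun v => ENNReal.ofReal (f v)) v := by
        intro v
        by_cases h : u ⊆ v <;> simp [hg, h, Set.indicator]
      calc ∑' v, ENNReal.ofReal (g v)
          = ∑' (v : {v : Finset ℕ | u ⊆ v}), ENNReal.ofReal (f v.1) := by
            rw [_root_.tsum_subtype {v : Finset ℕ | u ⊆ v} (fun v => ENNReal.ofReal (f v))]
            exact tsum_congr hind
        _ ≤ ∑' (v : {v : Finset ℕ | u ⊆ v}), (ENNReal.ofReal ξ *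
              ENNReal.ofReal ((((v.1 \ u).card.factorial : ℝ)) ^ a *
                ∏ j ∈ (v.1 \ u), ((2 : ℝ) ^ a * C ^ 2 * γseq j))) := by
            apply ENNReal.tsum_le_tsum
            intro v
            rw [← ENNReal.ofReal_mul hξnn]
            exact ENNReal.ofReal_le_ofReal (hkey v.1 v.2)
        _ ≤ ∑' (w : Finset ℕ), (ENNReal.ofReal ξ *
              ENNReal.ofReal (((w.card.factorial : ℝ)) ^ a *
                ∏ j ∈ w, ((2 : ℝ) ^ a * C ^ 2 * γseq j))) := by
            apply ENNReal.tsum_comp_le_tsum_of_injective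
              (f := fun v : {v : Finset ℕ | u ⊆ v} => v.1 \ u)
            intro v₁ v₂ h
            have e1 : u ∪ (v₁.1 \ u) = v₁.1 := Finset.union_sdiff_of_subset v₁.2
            have e2 : u ∪ (v₂.1 \ u) = v₂.1 := Finset.union_sdiff_of_subset v₂.2
            have h' : v₁.1 \ u = v₂.1 \ u := h
            ext1
            rw [← e1, ← e2, h']
        _ = ENNReal.ofReal ξ * c := by rw [ENNReal.tsum_mul_left, hc]
        _ = c * ENNReal.ofReal ξ := mul_comm _ _
  · -- (ii)
    intro h Td hTd u
    have hpow : (0:ℝ) < C ^ (2 * u.card) := pow_pos hC _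
    have hanti : Antitone (fun s : ℕ => Δ (Finset.range s \ u) γ u) := by
      apply antitone_nat_of_succ_le
      intro s
      by_cases hs : s ∈ u
      · simp only [Finset.range_add_one, Finset.insert_sdiff_of_mem _ hs, le_refl]
      · have hsn : s ∉ Finset.range s \ u := by simp
        simp only [Finset.range_add_one, Finset.insert_sdiff_of_notMem _ hs,
          delta_insert γ hsn u]
        have := h (Finset.range s \ u) (u ∪ {s})
        linarith
    have hL0 : 0 ≤ C ^ (2 * u.card) * Td u :=
      ge_of_tendsto' (hTd u) (fun s => h _ _)
    have hLle : C ^ (2 * u.card) * Td u ≤ γ u := by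
      have h0 := le_of_tendsto (hTd u)
        (Filter.Eventually.of_forall (fun s => hanti (Nat.zero_le s)))
      simpa [Δ] using h0
    constructor
    · exact (mul_nonneg_iff_of_pos_left hpow).mp hL0
    · rw [inv_mul_eq_div, le_div_iff₀ hpow, mul_comm]
      exact hLle
end

section
/- Let C > 0 and let γ be POD weights, γ_u = Γ_{|u|} Π_{j ∈ u} γ_j, with (γ_j)_{j ∈ ℕ} non-increasing and non-negative and 0 ≤ Γ_k ≤ C_a (k!)^a for constants a, C_a > 0. Assume Γ_1 > 0, p > a, and Σ_{j ∈ ℕ} γ_j < ∞, where p := sup{τ > 0 : Σ_j γ_j^{1/τ} < ∞}. Then Σ_{v ∈ 𝒰} C^{2|v|} γ_v < ∞, γ↑ := T↑ γ is well-defined by (T↑ γ)_u := Σ_{v ∈ 𝒰, u ⊆ v} C^{2|v|} γ_v, and decay(γ↑) = decay(γ) = p, where for a family a = (a_v)_{v ∈ 𝒱} of non-negative reals over a countable index set, decay(a) := sup{τ > 0 : Σ_{v ∈ 𝒱} a_v^{1/τ} < ∞} (with sup ∅ := 0). -/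
open Finset

/-- The decay of a family of non-negative reals:
`decay(a) := sup {τ > 0 : Σ_v a_v^{1/τ} < ∞}` (with `sup ∅ := 0`),
taking values in `[0, ∞]`. -/
noncomputable def decay {V : Type*} (f : V → ℝ) : ENNReal :=
  ⨆ (t : ℝ) (_ : 0 < t ∧ Summable fun v => f v ^ (1 / t)), ENNReal.ofReal t

section AuxLemmas

open Filter

/-- Summable from eventual (cofinite) domination by a summable function. -/
lemma auxEvLe {ι : Type*} {f g : ι → ℝ} (hf : ∀ i, 0 ≤ f i) (hg : Summable g)
    (h : ∀ᶠ i in Filter.cofinite, f i ≤ g i) : Summable f := by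
  have hfin : {i | ¬ f i ≤ g i}.Finite := by
    simpa [Filter.eventually_cofinite] using h
  classical
  rw [← Finset.summable_compl_iff hfin.toFinset]
  refine Summable.of_nonneg_of_le (fun b => hf b) (fun b => ?_)
    ((Finset.summable_compl_iff hfin.toFinset).2 hg)
  have hb : (b : ι) ∉ hfin.toFinset := b.2
  rw [Set.Finite.mem_toFinset] at hb
  simpa using not_not.mp hb

/-- Increasing the exponent preserves summability for nonneg families. -/
lemma auxRpowLe {ι : Type*} {f : ι → ℝ} (hf : ∀ i, 0 ≤ f i) {e e' : ℝ} (he : 0 < e)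
    (hee' : e ≤ e') (hsum : Summable fun i => f i ^ e) : Summable fun i => f i ^ e' := by
  refine auxEvLe (fun i => Real.rpow_nonneg (hf i) _) hsum ?_
  have hev : ∀ᶠ i in Filter.cofinite, f i ^ e < 1 :=
    hsum.tendsto_cofinite_zero.eventually_lt_const one_pos
  filter_upwards [hev] with i hi
  rcases eq_or_lt_of_le (hf i) with h0 | h0
  · rw [← h0, Real.zero_rpow (ne_of_gt he), Real.zero_rpow (ne_of_gt (lt_of_lt_of_le he hee'))]
  · have hle1 : f i ≤ 1 := by
      by_contra hgt
      push_neg at hgt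
      have : 1 < f i ^ e := (Real.one_lt_rpow_iff (hf i)).2 (Or.inl ⟨hgt, he⟩)
      linarith
    exact Real.rpow_le_rpow_of_exponent_ge h0 hle1 hee'

/-- two-term subadditivity of rpow on nonneg reals for exponents in [0,1]. -/
lemma auxAddRpow {x y p : ℝ} (hx : 0 ≤ x) (hy : 0 ≤ y) (hp : 0 ≤ p) (hp1 : p ≤ 1) :
    (x + y) ^ p ≤ x ^ p + y ^ p := by
  have := NNReal.rpow_add_le_add_rpow x.toNNReal y.toNNReal hp hp1
  have hcoe : ((x.toNNReal + y.toNNReal : NNReal) : ℝ) = x + y := by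
    simp [Real.coe_toNNReal _ hx, Real.coe_toNNReal _ hy]
  calc (x + y) ^ p = ((x.toNNReal + y.toNNReal : NNReal) : ℝ) ^ p := by rw [hcoe]
    _ = (((x.toNNReal + y.toNNReal) ^ p : NNReal) : ℝ) := by rw [NNReal.coe_rpow]
    _ ≤ ((x.toNNReal ^ p + y.toNNReal ^ p : NNReal) : ℝ) := by exact_mod_cast this
    _ = x ^ p + y ^ p := by
        simp [NNReal.coe_rpow, Real.coe_toNNReal _ hx, Real.coe_toNNReal _ hy]

lemma auxFinRpow {ι : Type*} (F : Finset ι) (x : ι → ℝ) (hx : ∀ i, 0 ≤ x i) {p : ℝ}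
    (hp0 : 0 < p) (hp1 : p ≤ 1) : (∑ i ∈ F, x i) ^ p ≤ ∑ i ∈ F, x i ^ p := by
  classical
  induction F using Finset.cons_induction with
  | empty => simp [Real.zero_rpow (ne_of_gt hp0)]
  | cons a F ha ih =>
    rw [Finset.sum_cons, Finset.sum_cons]
    calc (x a + ∑ i ∈ F, x i) ^ p ≤ x a ^ p + (∑ i ∈ F, x i) ^ p :=
          auxAddRpow (hx a) (Finset.sum_nonneg fun i _ => hx i) hp0.le hp1
      _ ≤ x a ^ p + ∑ i ∈ F, x i ^ p := by linarith

lemma auxTsumRpow {ι : Type*} (x : ι → ℝ) (hx : ∀ i, 0 ≤ x i) (hsx : Summable x)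
    {p : ℝ} (hp0 : 0 < p) (hp1 : p ≤ 1)
    (hsxp : Summable fun i => x i ^ p) :
    (∑' i, x i) ^ p ≤ ∑' i, x i ^ p := by
  have hconv : Tendsto (fun F : Finset ι => (∑ i ∈ F, x i) ^ p) atTop
      (nhds ((∑' i, x i) ^ p)) := by
    have hcont : ContinuousAt (fun y : ℝ => y ^ p) (∑' i, x i) :=
      Real.continuousAt_rpow_const _ _ (Or.inr hp0.le)
    exact hcont.tendsto.comp hsx.hasSum
  refine le_of_tendsto hconv (Filter.Eventually.of_forall fun F => ?_)
  exact (auxFinRpow F x hx hp0 hp1).trans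
    (Summable.sum_le_tsum F (fun i _ => Real.rpow_nonneg (hx i) _) hsxp)

/-- Key combinatorial estimate: `k! * e_k(b restricted to N) ≤ (∑_{j∈N} b j)^k`. -/
lemma auxComb (b : ℕ → ℝ) (hb : ∀ j, 0 ≤ b j) (N : Finset ℕ) (k : ℕ) :
    (k.factorial : ℝ) * ∑ u ∈ N.powersetCard k, ∏ j ∈ u, b j ≤ (∑ j ∈ N, b j) ^ k := by
  classical
  rw [Finset.sum_pow_eq_sum_piAntidiag]
  set e : Finset ℕ → (ℕ → ℕ) := fun u i => if i ∈ u then 1 else 0 with he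
  have hinj : Set.InjOn e (N.powersetCard k : Set (Finset ℕ)) := by
    intro u hu v hv huv
    ext i
    have := congrFun huv i
    by_cases hiu : i ∈ u <;> by_cases hiv : i ∈ v <;> simp [he, hiu, hiv] at this ⊢
  have hsub : (N.powersetCard k).image e ⊆ N.piAntidiag k := by
    intro f hf
    obtain ⟨u, hu, rfl⟩ := Finset.mem_image.mp hf
    obtain ⟨huN, huk⟩ := Finset.mem_powersetCard.mp hu
    rw [Finset.mem_piAntidiag]
    constructor
    · rw [he]
      simp only
      rw [Finset.sum_ite_mem, Finset.inter_eq_right.mpr huN, Finset.sum_const, ← huk]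
      simp
    · intro i hi
      have hiu : i ∈ u := by
        by_contra hiu
        exact hi (by simp [he, hiu])
      exact huN hiu
  have hstep : ∑ f ∈ (N.powersetCard k).image e,
      ((Nat.multinomial N f : ℝ) * ∏ i ∈ N, b i ^ f i)
      ≤ ∑ f ∈ N.piAntidiag k, ((Nat.multinomial N f : ℝ) * ∏ i ∈ N, b i ^ f i) := by
    refine Finset.sum_le_sum_of_subset_of_nonneg hsub fun f _ _ => ?_
    have : (0:ℝ) ≤ ∏ i ∈ N, b i ^ f i := Finset.prod_nonneg fun i _ => pow_nonneg (hb i) _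
    positivity
  refine le_trans ?_ hstep
  rw [Finset.sum_image hinj]
  rw [Finset.mul_sum]
  refine le_of_eq (Finset.sum_congr rfl fun u hu => ?_)
  obtain ⟨huN, huk⟩ := Finset.mem_powersetCard.mp hu
  have hmult : Nat.multinomial N (e u) = k.factorial := by
    rw [Nat.multinomial]
    have h1 : ∑ i ∈ N, e u i = k := by
      rw [he]
      simp only
      rw [Finset.sum_ite_mem, Finset.inter_eq_right.mpr huN, Finset.sum_const, ← huk]
      simp
    have h2 : ∏ i ∈ N, (e u i).factorial = 1 := by
      refine Finset.prod_eq_one fun i _ => ?_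
      by_cases hiu : i ∈ u <;> simp [he, hiu]
    rw [h1, h2, Nat.div_one]
  have hprod : ∏ i ∈ N, b i ^ e u i = ∏ j ∈ u, b j := by
    rw [← Finset.prod_subset huN (fun i _ hiu => by simp [he, hiu])]
    refine Finset.prod_congr rfl fun i hiu => by simp [he, hiu]
  rw [hmult, hprod]

/-- Lemma A: summability of `c_{|u|} ∏_{j∈u} b_j` over all finite subsets. -/
lemma auxLemA (b : ℕ → ℝ) (hb : ∀ j, 0 ≤ b j) (hsb : Summable b)
    (c : ℕ → ℝ) (hc : ∀ k, 0 ≤ c k)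
    (hcs : Summable fun k => c k * (∑' j, b j) ^ k / (k.factorial : ℝ)) :
    Summable fun u : Finset ℕ => c u.card * ∏ j ∈ u, b j := by
  classical
  set s : ℝ := ∑' j, b j with hs
  have hs0 : 0 ≤ s := tsum_nonneg hb
  have hterm : ∀ k, 0 ≤ c k * s ^ k / (k.factorial : ℝ) := by
    intro k
    have h : (0:ℝ) < k.factorial := by exact_mod_cast k.factorial_pos
    exact div_nonneg (mul_nonneg (hc k) (pow_nonneg hs0 k)) h.le
  refine summable_of_sum_le (c := ∑' k, c k * s ^ k / (k.factorial : ℝ)) ?_ ?_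
  · intro u
    exact mul_nonneg (hc _) (Finset.prod_nonneg fun j _ => hb j)
  · intro S
    set K : ℕ := S.sup Finset.card with hK
    set N : Finset ℕ := S.sup id with hN
    have hmaps : ∀ u ∈ S, u.card ∈ Finset.range (K + 1) := by
      intro u hu
      rw [Finset.mem_range, Nat.lt_succ_iff]
      exact Finset.le_sup (f := Finset.card) hu
    rw [← Finset.sum_fiberwise_of_maps_to hmaps]
    have hstep : ∀ k ∈ Finset.range (K + 1),
        (∑ u ∈ S.filter (fun u => u.card = k), c u.card * ∏ j ∈ u, b j)
        ≤ c k * s ^ k / (k.factorial : ℝ) := by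
      intro k _
      have h1 : (∑ u ∈ S.filter (fun u => u.card = k), c u.card * ∏ j ∈ u, b j)
          = c k * ∑ u ∈ S.filter (fun u => u.card = k), ∏ j ∈ u, b j := by
        rw [Finset.mul_sum]
        refine Finset.sum_congr rfl fun u hu => ?_
        rw [(Finset.mem_filter.mp hu).2]
      rw [h1]
      have hsubset : S.filter (fun u => u.card = k) ⊆ N.powersetCard k := by
        intro u hu
        obtain ⟨huS, huk⟩ := Finset.mem_filter.mp hu
        exact Finset.mem_powersetCard.mpr ⟨Finset.le_sup (f := id) huS, huk⟩
      have h2 : (∑ u ∈ S.filter (fun u => u.card = k), ∏ j ∈ u, b j)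
          ≤ ∑ u ∈ N.powersetCard k, ∏ j ∈ u, b j :=
        Finset.sum_le_sum_of_subset_of_nonneg hsubset
          (fun u _ _ => Finset.prod_nonneg fun j _ => hb j)
      have h3 : (∑ u ∈ N.powersetCard k, ∏ j ∈ u, b j) ≤ s ^ k / (k.factorial : ℝ) := by
        have hfac : (0:ℝ) < k.factorial := by exact_mod_cast k.factorial_pos
        rw [le_div_iff₀ hfac, mul_comm]
        calc (k.factorial : ℝ) * ∑ u ∈ N.powersetCard k, ∏ j ∈ u, b j
            ≤ (∑ j ∈ N, b j) ^ k := auxComb b hb N k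
          _ ≤ s ^ k := by
              refine pow_le_pow_left₀ (Finset.sum_nonneg fun j _ => hb j) ?_ k
              exact Summable.sum_le_tsum N (fun j _ => hb j) hsb
      calc c k * ∑ u ∈ S.filter (fun u => u.card = k), ∏ j ∈ u, b j
          ≤ c k * (s ^ k / (k.factorial : ℝ)) := mul_le_mul_of_nonneg_left (h2.trans h3) (hc k)
        _ = c k * s ^ k / (k.factorial : ℝ) := by ring
    calc (∑ k ∈ Finset.range (K + 1), ∑ u ∈ S.filter (fun u => u.card = k),
            c u.card * ∏ j ∈ u, b j)
        ≤ ∑ k ∈ Finset.range (K + 1), c k * s ^ k / (k.factorial : ℝ) :=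
          Finset.sum_le_sum hstep
      _ ≤ ∑' k, c k * s ^ k / (k.factorial : ℝ) :=
          Summable.sum_le_tsum _ (fun k _ => hterm k) hcs

/-- Lemma B: `(k!)^α x^k / k!` is summable when `α < 1`, `x ≥ 0`. -/
lemma auxRatio (α : ℝ) (hα : α < 1) (x : ℝ) (hx : 0 ≤ x) :
    Summable fun k : ℕ => ((k.factorial : ℝ)) ^ α * x ^ k / (k.factorial : ℝ) := by
  have hfac : ∀ k : ℕ, (0:ℝ) < (k.factorial : ℝ) := fun k => by exact_mod_cast k.factorial_pos
  have hrw : ∀ k : ℕ, ((k.factorial : ℝ)) ^ α * x ^ k / (k.factorial : ℝ)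
      = ((k.factorial : ℝ)) ^ (α - 1) * x ^ k := by
    intro k
    rw [Real.rpow_sub (hfac k), Real.rpow_one]
    ring
  simp_rw [hrw]
  have hnn : ∀ k : ℕ, 0 ≤ ((k.factorial : ℝ)) ^ (α - 1) * x ^ k := fun k =>
    mul_nonneg (Real.rpow_nonneg (hfac k).le _) (pow_nonneg hx _)
  refine summable_of_ratio_norm_eventually_le (r := 1/2) (by norm_num) ?_
  have htend : Filter.Tendsto (fun k : ℕ => ((k:ℝ) + 1) ^ (α - 1) * x) Filter.atTop
      (nhds (0 * x)) := by
    refine Filter.Tendsto.mul_const x ?_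
    have h1 : Filter.Tendsto (fun y : ℝ => y ^ (α - 1)) Filter.atTop (nhds 0) := by
      have := tendsto_rpow_neg_atTop (y := 1 - α) (by linarith)
      simpa [neg_sub] using this
    exact h1.comp (tendsto_atTop_add_const_right Filter.atTop 1 tendsto_natCast_atTop_atTop)
  rw [zero_mul] at htend
  filter_upwards [htend.eventually_lt_const (by norm_num : (0:ℝ) < 1/2)] with k hk
  have hsucc : ((k+1).factorial : ℝ) ^ (α - 1) * x ^ (k+1)
      = (((k:ℝ) + 1) ^ (α - 1) * x) * (((k.factorial : ℝ)) ^ (α - 1) * x ^ k) := by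
    rw [Nat.factorial_succ]
    push_cast
    rw [Real.mul_rpow (by positivity) (hfac k).le]
    ring
  rw [Real.norm_of_nonneg (hnn (k+1)), Real.norm_of_nonneg (hnn k), hsucc]
  exact mul_le_mul_of_nonneg_right hk.le (hnn k)

/-- Lemma C: summability of POD-type weights at exponent `1/t` for `t > a`. -/
lemma auxLemC (Γ : ℕ → ℝ) (hΓnn : ∀ k, 0 ≤ Γ k) (a Ca t : ℝ) (hCa : 0 < Ca)
    (hΓ : ∀ k : ℕ, Γ k ≤ Ca * (k.factorial : ℝ) ^ a) (ht0 : 0 < t) (hat : a < t)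
    (b : ℕ → ℝ) (hb : ∀ j, 0 ≤ b j) (hsb : Summable b) :
    Summable fun u : Finset ℕ => Γ u.card ^ (1/t) * ∏ j ∈ u, b j := by
  refine auxLemA b hb hsb (fun k => Γ k ^ (1/t)) (fun k => Real.rpow_nonneg (hΓnn k) _) ?_
  set s : ℝ := ∑' j, b j with hs
  have hs0 : 0 ≤ s := tsum_nonneg hb
  have hmain : Summable fun k : ℕ =>
      Ca ^ (1/t) * (((k.factorial : ℝ)) ^ (a/t) * s ^ k / (k.factorial : ℝ)) := by
    refine Summable.mul_left _ (auxRatio (a/t) ?_ s hs0)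
    rw [div_lt_one ht0]
    exact hat
  refine Summable.of_nonneg_of_le (fun k => ?_) (fun k => ?_) hmain
  · have hfac : (0:ℝ) < (k.factorial : ℝ) := by exact_mod_cast k.factorial_pos
    exact div_nonneg (mul_nonneg (Real.rpow_nonneg (hΓnn k) _) (pow_nonneg hs0 _)) hfac.le
  · have hfac : (0:ℝ) < (k.factorial : ℝ) := by exact_mod_cast k.factorial_pos
    have hΓle : Γ k ^ (1/t) ≤ Ca ^ (1/t) * ((k.factorial : ℝ)) ^ (a/t) := by
      calc Γ k ^ (1/t) ≤ (Ca * (k.factorial : ℝ) ^ a) ^ (1/t) :=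
            Real.rpow_le_rpow (hΓnn k) (hΓ k) (by positivity)
        _ = Ca ^ (1/t) * ((k.factorial : ℝ)) ^ (a/t) := by
            rw [Real.mul_rpow hCa.le (Real.rpow_nonneg hfac.le _),
              ← Real.rpow_mul hfac.le, mul_one_div]
    calc Γ k ^ (1/t) * s ^ k / (k.factorial : ℝ)
        = Γ k ^ (1/t) * (s ^ k / (k.factorial : ℝ)) := by ring
      _ ≤ Ca ^ (1/t) * ((k.factorial : ℝ)) ^ (a/t) * (s ^ k / (k.factorial : ℝ)) := by
          refine mul_le_mul_of_nonneg_right hΓle ?_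
          positivity
      _ = Ca ^ (1/t) * (((k.factorial : ℝ)) ^ (a/t) * s ^ k / (k.factorial : ℝ)) := by ring

/-- Factorization of `(C^{2|u|} γ_u)^{1/T}`. -/
lemma auxEq (C : ℝ) (hC : 0 ≤ C) (γseq : ℕ → ℝ) (hnn : ∀ j, 0 ≤ γseq j)
    (Γ : ℕ → ℝ) (hΓnn : ∀ k, 0 ≤ Γ k) (γ : Finset ℕ → ℝ)
    (hγ : ∀ u, γ u = Γ u.card * ∏ j ∈ u, γseq j) (T : ℝ) (u : Finset ℕ) :
    (C ^ (2 * u.card) * γ u) ^ (1/T)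
      = Γ u.card ^ (1/T) * ∏ j ∈ u, ((C^2) ^ (1/T) * γseq j ^ (1/T)) := by
  have hprodnn : 0 ≤ ∏ j ∈ u, γseq j := Finset.prod_nonneg fun j _ => hnn j
  have hD : ∏ j ∈ u, ((C^2) ^ (1/T) * γseq j ^ (1/T))
      = ((C^2) ^ (1/T)) ^ u.card * ∏ j ∈ u, γseq j ^ (1/T) := by
    rw [Finset.prod_mul_distrib, Finset.prod_const]
  have hD2 : ((C^2) ^ (1/T)) ^ u.card = (C ^ (2 * u.card)) ^ (1/T) := by
    rw [← Real.rpow_natCast ((C^2) ^ (1/T)) u.card, ← Real.rpow_mul (by positivity),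
      mul_comm (1/T), Real.rpow_mul (by positivity), Real.rpow_natCast, ← pow_mul]
  rw [hγ u, Real.mul_rpow (by positivity : (0:ℝ) ≤ C ^ (2*u.card))
    (mul_nonneg (hΓnn _) hprodnn), Real.mul_rpow (hΓnn _) hprodnn, hD, hD2,
    Real.finset_prod_rpow u _ (fun j _ => hnn j)]
  ring

end AuxLemmas

theorem stmt19 (C : ℝ) (hC : 0 < C) (γseq : ℕ → ℝ) (Γ : ℕ → ℝ) (a Ca : ℝ)
    (hmono : Antitone γseq) (hnn : ∀ j, 0 ≤ γseq j) (hΓnn : ∀ k, 0 ≤ Γ k)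
    (ha : 0 < a) (hCa : 0 < Ca) (hΓ : ∀ k : ℕ, Γ k ≤ Ca * (k.factorial : ℝ) ^ a)
    (hΓ1 : 0 < Γ 1)
    (hp : ENNReal.ofReal a < decay γseq)
    (hsumj : Summable γseq)
    (γ : Finset ℕ → ℝ) (hγ : ∀ u, γ u = Γ u.card * ∏ j ∈ u, γseq j)
    (γup : Finset ℕ → ℝ)
    (hγup : ∀ u, γup u = ∑' v : Finset ℕ, if u ⊆ v then C ^ (2 * v.card) * γ v else 0) :
    (Summable fun v : Finset ℕ => C ^ (2 * v.card) * γ v) ∧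
    decay γup = decay γ ∧ decay γ = decay γseq := by
  classical
  have hγnn : ∀ u, 0 ≤ γ u := fun u => by
    rw [hγ u]; exact mul_nonneg (hΓnn _) (Finset.prod_nonneg fun j _ => hnn j)
  have hFnn : ∀ u : Finset ℕ, 0 ≤ C ^ (2 * u.card) * γ u := fun u =>
    mul_nonneg (pow_nonneg hC.le _) (hγnn u)
  -- extract t₁ > a with summable γseq^{1/t₁}
  simp only [decay] at hp
  obtain ⟨t₁, ht₁⟩ := lt_iSup_iff.mp hp
  obtain ⟨hP₁, hat₁'⟩ := lt_iSup_iff.mp ht₁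
  have hat₁ : a < t₁ := (ENNReal.ofReal_lt_ofReal_iff hP₁.1).mp hat₁'
  set t₀ : ℝ := max t₁ 1 with ht₀def
  have ht₀0 : 0 < t₀ := lt_of_lt_of_le hP₁.1 (le_max_left _ _)
  have ht₀1 : 1 ≤ t₀ := le_max_right _ _
  have ht₀a : a < t₀ := lt_of_lt_of_le hat₁ (le_max_left _ _)
  have hsum1 : Summable fun j => γseq j ^ (1/(1:ℝ)) := by
    simpa [Real.rpow_one] using hsumj
  have hmaxsum : ∀ s u : ℝ, (Summable fun j => γseq j ^ (1/s)) →
      (Summable fun j => γseq j ^ (1/u)) →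
      Summable fun j => γseq j ^ (1/(max s u)) := by
    intro s u hs hu
    rcases le_total s u with h | h
    · rwa [max_eq_right h]
    · rwa [max_eq_left h]
  have hsum₀ : Summable fun j => γseq j ^ (1/t₀) := hmaxsum _ _ hP₁.2 hsum1
  -- master summability
  have master : ∀ T : ℝ, 0 < T → a < T → (Summable fun j => γseq j ^ (1/T)) → ∀ D : ℝ, 0 ≤ D →
      Summable fun u : Finset ℕ => Γ u.card ^ (1/T) * ∏ j ∈ u, (D * γseq j ^ (1/T)) := by
    intro T hT0 hTa hsT D hD
    exact auxLemC Γ hΓnn a Ca T hCa hΓ hT0 hTa _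
      (fun j => mul_nonneg hD (Real.rpow_nonneg (hnn j) _)) (hsT.mul_left D)
  have hgsum : ∀ T : ℝ, 0 < T → a < T → (Summable fun j => γseq j ^ (1/T)) →
      Summable fun u : Finset ℕ => (C ^ (2 * u.card) * γ u) ^ (1/T) := by
    intro T hT0 hTa hsT
    exact (master T hT0 hTa hsT ((C^2) ^ (1/T))
      (Real.rpow_nonneg (by positivity) _)).congr
      fun u => (auxEq C hC.le γseq hnn Γ hΓnn γ hγ T u).symm
  -- PART 1
  have part1 : Summable fun v : Finset ℕ => C ^ (2 * v.card) * γ v := by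
    have h := auxRpowLe hFnn (e := 1/t₀) (e' := 1) (by positivity)
      (by rw [div_le_one ht₀0]; exact ht₀1) (hgsum t₀ ht₀0 ht₀a hsum₀)
    simpa [Real.rpow_one] using h
  have hite_nn : ∀ u v : Finset ℕ,
      0 ≤ (if u ⊆ v then C ^ (2 * v.card) * γ v else 0) := by
    intro u v
    split
    · exact hFnn v
    · exact le_rfl
  have hite_sum : ∀ u : Finset ℕ, Summable fun v : Finset ℕ =>
      if u ⊆ v then C ^ (2 * v.card) * γ v else 0 := by
    intro u
    refine Summable.of_nonneg_of_le (fun v => hite_nn u v) (fun v => ?_) part1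
    split
    · exact le_rfl
    · exact hFnn v
  have hupnn : ∀ u, 0 ≤ γup u := fun u => by
    rw [hγup u]
    exact tsum_nonneg fun v => hite_nn u v
  have hsing : ∀ j : ℕ, γ ({j} : Finset ℕ) = Γ 1 * γseq j := by
    intro j
    rw [hγ]
    simp
  have hupow : ∀ j : ℕ, C^2 * Γ 1 * γseq j ≤ γup ({j} : Finset ℕ) := by
    intro j
    rw [hγup]
    have h := Summable.le_tsum (hite_sum {j}) {j} (fun v _ => hite_nn {j} v)
    simpa [hsing j, mul_assoc] using h
  -- decay F ≤ decay γseq via singletons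
  have hle_aux : ∀ (F : Finset ℕ → ℝ) (E : ℝ), 0 < E → (∀ j, E * γseq j ≤ F {j}) →
      decay F ≤ decay γseq := by
    intro F E hE hlb
    simp only [decay]
    refine iSup_le fun t => iSup_le fun hPt => ?_
    obtain ⟨ht0, hsumF⟩ := hPt
    have h1 : Summable fun j : ℕ => F ({j} : Finset ℕ) ^ (1/t) :=
      hsumF.comp_injective Finset.singleton_injective
    have h2 : Summable fun j : ℕ => (E ^ (1/t))⁻¹ * F ({j} : Finset ℕ) ^ (1/t) :=
      h1.mul_left _
    have hEpos : 0 < E ^ (1/t) := Real.rpow_pos_of_pos hE _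
    have hsumγ : Summable fun j => γseq j ^ (1/t) := by
      refine Summable.of_nonneg_of_le (fun j => Real.rpow_nonneg (hnn j) _) (fun j => ?_) h2
      have hstep : E ^ (1/t) * γseq j ^ (1/t) ≤ F ({j} : Finset ℕ) ^ (1/t) := by
        rw [← Real.mul_rpow hE.le (hnn j)]
        exact Real.rpow_le_rpow (mul_nonneg hE.le (hnn j)) (hlb j) (by positivity)
      have h3 := mul_le_mul_of_nonneg_left hstep (inv_nonneg.mpr hEpos.le)
      rwa [inv_mul_cancel_left₀ (ne_of_gt hEpos)] at h3
    exact le_iSup₂ (f := fun t (_ : 0 < t ∧ Summable fun j => γseq j ^ (1/t)) =>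
      ENNReal.ofReal t) t ⟨ht0, hsumγ⟩
  -- decay γseq ≤ decay F
  have hge_aux : ∀ (F : Finset ℕ → ℝ),
      (∀ T : ℝ, 0 < T → a < T → 1 ≤ T → (Summable fun j => γseq j ^ (1/T)) →
        Summable fun u => F u ^ (1/T)) →
      decay γseq ≤ decay F := by
    intro F hkey
    simp only [decay]
    refine iSup_le fun t => iSup_le fun hPt => ?_
    obtain ⟨ht0, hsumt⟩ := hPt
    have hT0 : 0 < max t t₀ := lt_of_lt_of_le ht0 (le_max_left _ _)
    have hTa : a < max t t₀ := lt_of_lt_of_le ht₀a (le_max_right _ _)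
    have hT1 : 1 ≤ max t t₀ := le_trans ht₀1 (le_max_right _ _)
    have hsumT : Summable fun j => γseq j ^ (1/(max t t₀)) := hmaxsum _ _ hsumt hsum₀
    have hFT := hkey (max t t₀) hT0 hTa hT1 hsumT
    calc ENNReal.ofReal t ≤ ENNReal.ofReal (max t t₀) :=
          ENNReal.ofReal_le_ofReal (le_max_left _ _)
      _ ≤ _ := le_iSup₂ (f := fun T (_ : 0 < T ∧ Summable fun u => F u ^ (1/T)) =>
          ENNReal.ofReal T) (max t t₀) ⟨hT0, hFT⟩
  -- decay γ ≥ decay γseq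
  have hγ_ge : decay γseq ≤ decay γ := by
    refine hge_aux γ fun T hT0 hTa _ hsumT => ?_
    refine (master T hT0 hTa hsumT 1 zero_le_one).congr fun u => ?_
    have h := (auxEq 1 zero_le_one γseq hnn Γ hΓnn γ hγ T u).symm
    simp only [one_pow, one_mul, Real.one_rpow] at h ⊢
    exact h
  -- decay γup ≥ decay γseq
  have hup_ge : decay γseq ≤ decay γup := by
    refine hge_aux γup fun T hT0 hTa hT1 hsumT => ?_
    have hr0 : 0 < 1/T := by positivity
    have hr1 : 1/T ≤ 1 := by rw [div_le_one hT0]; exact hT1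
    have hg_sum : Summable fun v : Finset ℕ => (C ^ (2 * v.card) * γ v) ^ (1/T) :=
      hgsum T hT0 hTa hsumT
    have hG_sum : Summable fun v : Finset ℕ =>
        (2:ℝ) ^ v.card * (C ^ (2 * v.card) * γ v) ^ (1/T) := by
      refine (master T hT0 hTa hsumT (2 * (C^2) ^ (1/T)) (by positivity)).congr fun u => ?_
      have h1 : ∏ j ∈ u, (2 * (C^2) ^ (1/T) * γseq j ^ (1/T))
          = (2:ℝ) ^ u.card * ∏ j ∈ u, ((C^2) ^ (1/T) * γseq j ^ (1/T)) := by
        simp_rw [mul_assoc]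
        rw [Finset.prod_mul_distrib, Finset.prod_const]
      rw [h1, auxEq C hC.le γseq hnn Γ hΓnn γ hγ T u]
      ring
    have hite_r_sum : ∀ u : Finset ℕ, Summable fun v : Finset ℕ =>
        if u ⊆ v then (C ^ (2 * v.card) * γ v) ^ (1/T) else 0 := by
      intro u
      refine Summable.of_nonneg_of_le (fun v => ?_) (fun v => ?_) hg_sum
      · split
        · exact Real.rpow_nonneg (hFnn v) _
        · exact le_rfl
      · split
        · exact le_rfl
        · exact Real.rpow_nonneg (hFnn v) _
    have hpt : ∀ u v : Finset ℕ,
        (if u ⊆ v then C ^ (2 * v.card) * γ v else 0) ^ (1/T)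
          = (if u ⊆ v then (C ^ (2 * v.card) * γ v) ^ (1/T) else 0) := by
      intro u v
      split
      · rfl
      · exact Real.zero_rpow (ne_of_gt hr0)
    have step1 : ∀ u : Finset ℕ, γup u ^ (1/T)
        ≤ ∑' v : Finset ℕ, (if u ⊆ v then (C ^ (2 * v.card) * γ v) ^ (1/T) else 0) := by
      intro u
      rw [hγup u]
      have hsxp : Summable fun v : Finset ℕ =>
          (if u ⊆ v then C ^ (2 * v.card) * γ v else 0) ^ (1/T) :=
        (hite_r_sum u).congr fun v => (hpt u v).symm
      have happ := auxTsumRpow _ (hite_nn u) (hite_sum u) hr0 hr1 hsxp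
      exact happ.trans_eq (tsum_congr (hpt u))
    refine summable_of_sum_le
      (c := ∑' v : Finset ℕ, (2:ℝ) ^ v.card * (C ^ (2 * v.card) * γ v) ^ (1/T))
      (fun u => Real.rpow_nonneg (hupnn u) _) ?_
    intro S
    calc ∑ u ∈ S, γup u ^ (1/T)
        ≤ ∑ u ∈ S, ∑' v : Finset ℕ, (if u ⊆ v then (C ^ (2 * v.card) * γ v) ^ (1/T) else 0) :=
          Finset.sum_le_sum fun u _ => step1 u
      _ = ∑' v : Finset ℕ, ∑ u ∈ S,
            (if u ⊆ v then (C ^ (2 * v.card) * γ v) ^ (1/T) else 0) :=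
          (Summable.tsum_finsetSum fun u _ => hite_r_sum u).symm
      _ ≤ ∑' v : Finset ℕ, (2:ℝ) ^ v.card * (C ^ (2 * v.card) * γ v) ^ (1/T) := by
          refine Summable.tsum_le_tsum (fun v => ?_) (summable_sum fun u _ => hite_r_sum u) hG_sum
          rw [← Finset.sum_filter, Finset.sum_const, nsmul_eq_mul]
          have h1 : (S.filter (fun u => u ⊆ v)) ⊆ v.powerset := by
            intro u hu
            exact Finset.mem_powerset.mpr (Finset.mem_filter.mp hu).2
          have h2 := Finset.card_le_card h1
          rw [Finset.card_powerset] at h2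
          have hcard : ((S.filter (fun u => u ⊆ v)).card : ℝ) ≤ (2:ℝ) ^ v.card := by
            exact_mod_cast h2
          exact mul_le_mul_of_nonneg_right hcard (Real.rpow_nonneg (hFnn v) _)
  have hγ_le : decay γ ≤ decay γseq :=
    hle_aux γ (Γ 1) hΓ1 (fun j => le_of_eq (hsing j).symm)
  have hup_le : decay γup ≤ decay γseq :=
    hle_aux γup (C^2 * Γ 1) (by positivity) hupow
  have eγ : decay γ = decay γseq := le_antisymm hγ_le hγ_ge
  have eup : decay γup = decay γseq := le_antisymm hup_le hup_ge
  exact ⟨part1, eup.trans eγ.symm, eγ⟩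
end
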